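/- Let N ≥ 1 and ℓ₀ ≥ 1 be integers satisfying 2ℓ₀ ≥ N. Define the sequence (a_k)_{k≥0} in {0,1} by: a_k = 0 if and only if there exists an integer ℓ ≥ ℓ₀ with ℓ² ≤ k ≤ ℓ² + N − 1. For an integer k ≥ 1 set N(k) := #{ j ∈ {0,…,k−1} : a_j = 0 }, B(1) := 1, and for k ≥ 2 set B(k) := 1 + #{ j ∈ {0,…,k−2} : a_j ≠ a_{j+1} }. Then: for every k ∈ {1,…,ℓ₀²} one has N(k) = 0 and B(k) = 1; and for every k ≥ ℓ₀² + 1 one has B(k) ≤ 2(√k − ℓ₀) + 3 and N·(√k − ℓ₀) ≤ N(k) ≤ N·√k. -/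

import Mathlib

open Finset

theorem stmt_0 (N ℓ₀ : ℕ) (hN : 1 ≤ N) (hℓ₀ : 1 ≤ ℓ₀) (hNℓ₀ : N ≤ 2 * ℓ₀)
    (a : ℕ → ℕ) (ha01 : ∀ k, a k = 0 ∨ a k = 1)
    (ha : ∀ k, a k = 0 ↔ ∃ ℓ : ℕ, ℓ₀ ≤ ℓ ∧ ℓ ^ 2 ≤ k ∧ k ≤ ℓ ^ 2 + N - 1)
    (Nfun : ℕ → ℕ) (hNfun : ∀ k, Nfun k = ((Finset.range k).filter (fun j => a j = 0)).card)
    (Bfun : ℕ → ℕ) (hB1 : Bfun 1 = 1)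
    (hBfun : ∀ k, 2 ≤ k →
      Bfun k = 1 + ((Finset.range (k - 1)).filter (fun j => a j ≠ a (j + 1))).card) :
    (∀ k : ℕ, 1 ≤ k → k ≤ ℓ₀ ^ 2 → Nfun k = 0 ∧ Bfun k = 1) ∧
    (∀ k : ℕ, ℓ₀ ^ 2 + 1 ≤ k →
      (Bfun k : ℝ) ≤ 2 * (Real.sqrt k - ℓ₀) + 3 ∧
      (N : ℝ) * (Real.sqrt k - ℓ₀) ≤ (Nfun k : ℝ) ∧
      (Nfun k : ℝ) ≤ (N : ℝ) * Real.sqrt k) := by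
  have hall : ∀ j, j < ℓ₀ ^ 2 → a j = 1 := by
    intro j hj
    rcases ha01 j with h | h
    · exfalso
      obtain ⟨ℓ, hℓ, hℓ2, _⟩ := (ha j).1 h
      have : ℓ₀ ^ 2 ≤ ℓ ^ 2 := Nat.pow_le_pow_left hℓ 2
      omega
    · exact h
  constructor
  · intro k hk1 hk2
    constructor
    · rw [hNfun, Finset.card_eq_zero, Finset.filter_eq_empty_iff]
      intro j hj
      simp only [mem_range] at hj
      have := hall j (by omega)
      omega
    · rcases Nat.lt_or_ge k 2 with h2 | h2
      · interval_cases k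
        exact hB1
      · rw [hBfun k h2]
        have he : ((Finset.range (k - 1)).filter (fun j => a j ≠ a (j + 1))) = ∅ := by
          rw [Finset.filter_eq_empty_iff]
          intro j hj
          simp only [mem_range] at hj
          have h1 := hall j (by omega)
          have h2 := hall (j + 1) (by omega)
          simp [h1, h2]
        rw [he]
        simp
  · intro k hk
    set m := Nat.sqrt k with hmdef
    have hm2 : m ^ 2 ≤ k := by simpa [pow_two] using Nat.sqrt_le' k
    have hkm : k < (m + 1) ^ 2 := by simpa [pow_two] using Nat.lt_succ_sqrt' k
    have hℓ₀m : ℓ₀ ≤ m := by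
      rw [hmdef, Nat.le_sqrt']
      have : ℓ₀ ^ 2 ≤ k := by omega
      simpa [pow_two] using this
    have hk2 : 2 ≤ k := by nlinarith
    have hksq : Real.sqrt k * Real.sqrt k = k := Real.mul_self_sqrt (by positivity)
    have hs1 : (m : ℝ) ≤ Real.sqrt k := by
      rw [show ((m : ℝ)) = Real.sqrt ((m : ℝ) ^ 2) by
        rw [Real.sqrt_sq (by positivity)]]
      apply Real.sqrt_le_sqrt
      exact_mod_cast (by exact_mod_cast hm2 : ((m ^ 2 : ℕ) : ℝ) ≤ (k : ℝ))
    have hs2 : Real.sqrt k ≤ (m : ℝ) + 1 := by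
      rw [show ((m : ℝ) + 1) = Real.sqrt (((m : ℝ) + 1) ^ 2) by
        rw [Real.sqrt_sq (by positivity)]]
      apply Real.sqrt_le_sqrt
      have : (k : ℝ) ≤ ((m + 1 : ℕ) : ℝ) ^ 2 := by exact_mod_cast hkm.le
      push_cast at this ⊢
      linarith
    -- counting zeros
    have hZ : (range k).filter (fun j => a j = 0)
        = (Icc ℓ₀ m).biUnion (fun ℓ => Ico (ℓ ^ 2) (min k (ℓ ^ 2 + N))) := by
      ext j
      simp only [mem_filter, mem_range, mem_biUnion, mem_Icc, mem_Ico, ha, lt_min_iff]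
      constructor
      · rintro ⟨hjk, ℓ, hℓ0, hℓ1, hℓ2⟩
        refine ⟨ℓ, ⟨hℓ0, ?_⟩, hℓ1, hjk, by omega⟩
        by_contra hc
        have : (m + 1) ^ 2 ≤ ℓ ^ 2 := Nat.pow_le_pow_left (by omega) 2
        omega
      · rintro ⟨ℓ, ⟨hℓ0, hℓm⟩, h1, h2, h3⟩
        exact ⟨h2, ℓ, hℓ0, h1, by omega⟩
    have hcard : ((range k).filter (fun j => a j = 0)).card
        = ∑ ℓ ∈ Icc ℓ₀ m, (min k (ℓ ^ 2 + N) - ℓ ^ 2) := by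
      rw [hZ, Finset.card_biUnion]
      · exact Finset.sum_congr rfl fun ℓ _ => by rw [Nat.card_Ico]
      · intro x hx y hy hxy
        simp only [Finset.mem_coe, mem_Icc] at hx hy
        have key : ∀ u v : ℕ, ℓ₀ ≤ u → u < v →
            Disjoint (Ico (u ^ 2) (min k (u ^ 2 + N))) (Ico (v ^ 2) (min k (v ^ 2 + N))) := by
          intro u v hu huv
          have h1 : (u + 1) ^ 2 ≤ v ^ 2 := Nat.pow_le_pow_left (by omega) 2
          have h2 : (u + 1) ^ 2 = u ^ 2 + 2 * u + 1 := by ring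
          rw [Finset.disjoint_left]
          intro j hj1 hj2
          simp only [mem_Ico, lt_min_iff] at hj1 hj2
          omega
        rcases Nat.lt_or_ge x y with h | h
        · exact key x y hx.1 h
        · exact (key y x hy.1 (by omega)).symm
    have hsum : ∑ ℓ ∈ Icc ℓ₀ m, (min k (ℓ ^ 2 + N) - ℓ ^ 2)
        = N * (m - ℓ₀) + min (k - m ^ 2) N := by
      have hmm : m = (m - 1) + 1 := by omega
      rw [show Icc ℓ₀ m = Icc ℓ₀ ((m - 1) + 1) by rw [← hmm],
        Finset.sum_Icc_succ_top (by omega)]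
      have hlast : min k (((m - 1) + 1) ^ 2 + N) - ((m - 1) + 1) ^ 2
          = min (k - m ^ 2) N := by
        rw [← hmm]
        omega
      have hconst : ∀ ℓ ∈ Icc ℓ₀ (m - 1), min k (ℓ ^ 2 + N) - ℓ ^ 2 = N := by
        intro ℓ hℓ
        simp only [mem_Icc] at hℓ
        have h1 : (ℓ + 1) ^ 2 ≤ m ^ 2 := Nat.pow_le_pow_left (by omega) 2
        have h2 : (ℓ + 1) ^ 2 = ℓ ^ 2 + 2 * ℓ + 1 := by ring
        omega
      rw [Finset.sum_congr rfl hconst, Finset.sum_const, hlast, Nat.card_Icc,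
        smul_eq_mul]
      have : m - 1 + 1 - ℓ₀ = m - ℓ₀ := by omega
      rw [this, Nat.mul_comm]
    have hNid : Nfun k = N * (m - ℓ₀) + min (k - m ^ 2) N := by
      rw [hNfun, hcard, hsum]
    have hNcast : (Nfun k : ℝ) = (N : ℝ) * ((m : ℝ) - ℓ₀) + min ((k : ℝ) - (m : ℝ) ^ 2) N := by
      rw [hNid]
      push_cast [Nat.cast_sub hℓ₀m, Nat.cast_sub hm2, Nat.cast_min]
      ring_nf
    constructor
    · -- B bound
      have hBsub : ((range (k - 1)).filter (fun j => a j ≠ a (j + 1))) ⊆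
          (Icc ℓ₀ m).biUnion (fun ℓ => ({ℓ ^ 2 - 1, ℓ ^ 2 + N - 1} : Finset ℕ)) := by
        intro j hj
        simp only [mem_filter, mem_range] at hj
        obtain ⟨hjk, hne⟩ := hj
        simp only [mem_biUnion, mem_Icc, mem_insert, mem_singleton]
        rcases ha01 j with h0 | h1
        · obtain ⟨ℓ, hℓ0, hb1, hb2⟩ := (ha j).1 h0
          have hj1 : ¬ (a (j + 1) = 0) := by
            intro hc; rw [h0, hc] at hne; exact hne rfl
          rw [ha] at hj1
          push_neg at hj1
          have hx := hj1 ℓ hℓ0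
          have hℓm : ℓ ≤ m := by
            by_contra hc
            have : (m + 1) ^ 2 ≤ ℓ ^ 2 := Nat.pow_le_pow_left (by omega) 2
            omega
          exact ⟨ℓ, ⟨hℓ0, hℓm⟩, Or.inr (by omega)⟩
        · have h0' : a (j + 1) = 0 := by
            rcases ha01 (j + 1) with h | h
            · exact h
            · rw [h1, h] at hne; exact absurd rfl hne
          obtain ⟨ℓ, hℓ0, hb1, hb2⟩ := (ha (j + 1)).1 h0'
          have hj0 : ¬ (a j = 0) := by omega
          rw [ha] at hj0
          push_neg at hj0
          have hx := hj0 ℓ hℓ0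
          have hℓm : ℓ ≤ m := by
            by_contra hc
            have : (m + 1) ^ 2 ≤ ℓ ^ 2 := Nat.pow_le_pow_left (by omega) 2
            omega
          exact ⟨ℓ, ⟨hℓ0, hℓm⟩, Or.inl (by omega)⟩
      have hBcard : ((range (k - 1)).filter (fun j => a j ≠ a (j + 1))).card
          ≤ 2 * (m + 1 - ℓ₀) := by
        calc ((range (k - 1)).filter (fun j => a j ≠ a (j + 1))).card
            ≤ ((Icc ℓ₀ m).biUnion (fun ℓ => ({ℓ ^ 2 - 1, ℓ ^ 2 + N - 1} : Finset ℕ))).card :=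
              Finset.card_le_card hBsub
          _ ≤ ∑ ℓ ∈ Icc ℓ₀ m, ({ℓ ^ 2 - 1, ℓ ^ 2 + N - 1} : Finset ℕ).card :=
              Finset.card_biUnion_le
          _ ≤ ∑ _ℓ ∈ Icc ℓ₀ m, 2 := Finset.sum_le_sum (fun ℓ _ => by
              have := Finset.card_insert_le (ℓ ^ 2 - 1) ({ℓ ^ 2 + N - 1} : Finset ℕ)
              simp only [Finset.card_singleton] at this
              omega)
          _ = 2 * (m + 1 - ℓ₀) := by
              rw [Finset.sum_const, Nat.card_Icc, smul_eq_mul, Nat.mul_comm]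
      have hBle : Bfun k ≤ 1 + 2 * (m + 1 - ℓ₀) := by
        rw [hBfun k hk2]
        omega
      have hcast : ((1 + 2 * (m + 1 - ℓ₀) : ℕ) : ℝ) = 2 * ((m : ℝ) - ℓ₀) + 3 := by
        push_cast [Nat.cast_sub (by omega : ℓ₀ ≤ m + 1)]
        ring
      calc (Bfun k : ℝ) ≤ ((1 + 2 * (m + 1 - ℓ₀) : ℕ) : ℝ) := by exact_mod_cast hBle
        _ = 2 * ((m : ℝ) - ℓ₀) + 3 := hcast
        _ ≤ 2 * (Real.sqrt k - ℓ₀) + 3 := by linarith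
    constructor
    · -- N lower bound
      rw [hNcast]
      have hNR : (N : ℝ) ≤ 2 * ℓ₀ := by exact_mod_cast hNℓ₀
      have hℓ₀R : (ℓ₀ : ℝ) ≤ m := by exact_mod_cast hℓ₀m
      have hmin : (N : ℝ) * (Real.sqrt k - m) ≤ min ((k : ℝ) - (m : ℝ) ^ 2) N := by
        rw [le_min_iff]
        constructor
        · nlinarith [mul_nonneg (sub_nonneg.2 hs1) (by linarith : (0 : ℝ) ≤ Real.sqrt k + m - N)]
        · nlinarith [mul_nonneg (by positivity : (0 : ℝ) ≤ (N : ℝ)) (by linarith : (0 : ℝ) ≤ (m : ℝ) + 1 - Real.sqrt k)]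
      nlinarith [hmin]
    · -- N upper bound
      rw [hNcast]
      have hminle : min ((k : ℝ) - (m : ℝ) ^ 2) N ≤ (N : ℝ) := min_le_right _ _
      have hℓ₀R : (1 : ℝ) ≤ (ℓ₀ : ℝ) := by exact_mod_cast hℓ₀
      have hℓ₀R2 : (ℓ₀ : ℝ) ≤ m := by exact_mod_cast hℓ₀m
      have hNpos : (0 : ℝ) ≤ N := by positivity
      linarith [hminle, mul_nonneg hNpos (sub_nonneg.2 hs1),
        mul_nonneg hNpos (by linarith : (0 : ℝ) ≤ (ℓ₀ : ℝ) - 1)]
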